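/- Fix positive integers d and n, a finite index set A, and matrices V_{α,m} ∈ M_d(ℂ) for α ∈ A and m ∈ {0, …, n}. Consider the map K(ρ_n, …, ρ_0) = Σ_{m=0}^n Σ_{α ∈ A} V_{α,m}† ρ_m V_{α,m}. Then Tr K(ρ_n, …, ρ_0) = 1 for all d × d density matrices ρ_0, …, ρ_n if and only if there exist real numbers p_0, …, p_n ≥ 0 with Σ_m p_m = 1 such that Σ_{α ∈ A} V_{α,m} V_{α,m}† = p_m · I for each m. -/

import Mathlib

open scoped ComplexOrder Matrix

private lemma aux_conj_of_nonneg {c : ℂ} (hc : 0 ≤ c) : star c = c := by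
  have h := (Complex.le_def.mp hc).2
  apply Complex.ext <;> simp [← h]

private lemma aux_smul_psd {d : ℕ} {c : ℂ} (hc : 0 ≤ c)
    {M : Matrix (Fin d) (Fin d) ℂ} (hM : M.PosSemidef) : (c • M).PosSemidef := by
  refine Matrix.posSemidef_iff_dotProduct_mulVec.mpr ⟨?_, fun x => ?_⟩
  · show (c • M)ᴴ = _
    rw [Matrix.conjTranspose_smul, hM.1, aux_conj_of_nonneg hc]
  · rw [Matrix.smul_mulVec, dotProduct_smul, smul_eq_mul]
    exact mul_nonneg hc (hM.dotProduct_mulVec_nonneg x)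

private lemma aux_vecMulVec_psd {d : ℕ} (x : Fin d → ℂ) :
    (Matrix.vecMulVec x (star x)).PosSemidef := by
  refine Matrix.posSemidef_iff_dotProduct_mulVec.mpr ⟨?_, fun y => ?_⟩
  · ext i j
    simp [Matrix.conjTranspose_apply, Matrix.vecMulVec_apply, mul_comm]
  · have : dotProduct (star y) (Matrix.vecMulVec x (star x) *ᵥ y)
        = star (dotProduct (star x) y) * (dotProduct (star x) y) := by
      simp only [dotProduct, Matrix.mulVec, Matrix.vecMulVec_apply, star_sum,
        star_mul', Pi.star_apply, star_star, Finset.sum_mul, Finset.mul_sum]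
      rw [Finset.sum_comm]
      refine Finset.sum_congr rfl fun i _ => Finset.sum_congr rfl fun j _ => by ring
    rw [this]
    exact star_mul_self_nonneg _

private lemma aux_trace_mul_vecMulVec {d : ℕ} (B : Matrix (Fin d) (Fin d) ℂ) (x : Fin d → ℂ) :
    (B * Matrix.vecMulVec x (star x)).trace = dotProduct (star x) (B *ᵥ x) := by
  simp only [Matrix.trace, Matrix.diag, Matrix.mul_apply, Matrix.vecMulVec_apply,
    dotProduct, Matrix.mulVec, Pi.star_apply, Finset.mul_sum]
  refine Finset.sum_congr rfl fun i _ => Finset.sum_congr rfl fun j _ => by ring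

private lemma aux_quad_zero {d : ℕ} (M : Matrix (Fin d) (Fin d) ℂ)
    (h : ∀ x : Fin d → ℂ, dotProduct (star x) (M *ᵥ x) = 0) : M = 0 := by
  have hT : Matrix.toEuclideanLin M = 0 := by
    rw [← inner_map_self_eq_zero]
    intro x
    have hx := h ((WithLp.equiv 2 (Fin d → ℂ)) x)
    have h1 : (inner ℂ x (Matrix.toEuclideanLin M x) : ℂ) = 0 := by
      rw [← hx]
      simp [PiLp.inner_apply, dotProduct, Matrix.toEuclideanLin_apply,
        RCLike.inner_apply, mul_comm]
    rw [← inner_conj_symm, h1, map_zero]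
  exact (LinearEquiv.map_eq_zero_iff _).mp hT

private lemma aux_inv_nonneg {c : ℂ} (hc : 0 ≤ c) : 0 ≤ c⁻¹ := by
  have him : c.im = 0 := by simpa using ((Complex.le_def.mp hc).2).symm
  have hre : 0 ≤ c.re := by simpa using (Complex.le_def.mp hc).1
  have h : c = ((c.re : ℝ) : ℂ) := Complex.ext rfl (by simp [him])
  rw [h, ← Complex.ofReal_inv]
  exact Complex.zero_le_real.mpr (inv_nonneg.mpr hre)

/-- Trace preservation of the multi-variable Kraus-form map
`K(ρ_n, …, ρ_0) = Σ_m Σ_α V_{α,m}ᴴ ρ_m V_{α,m}` on all tuples of density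
matrices is equivalent to the existence of nonnegative reals `p_m` summing to
one with `Σ_α V_{α,m} V_{α,m}ᴴ = p_m • I` for each `m`. -/
theorem kraus_trace_preserving_iff (d n : ℕ) (hd : 0 < d)
    (A : Type*) [Fintype A]
    (V : A → Fin (n + 1) → Matrix (Fin d) (Fin d) ℂ) :
    (∀ ρ : Fin (n + 1) → Matrix (Fin d) (Fin d) ℂ,
      (∀ m, (ρ m).PosSemidef ∧ (ρ m).trace = 1) →
      (∑ m : Fin (n + 1), ∑ α : A, (V α m)ᴴ * ρ m * V α m).trace = 1) ↔
    (∃ p : Fin (n + 1) → ℝ, (∀ m, 0 ≤ p m) ∧ (∑ m, p m) = 1 ∧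
      ∀ m, (∑ α : A, V α m * (V α m)ᴴ)
        = (p m : ℂ) • (1 : Matrix (Fin d) (Fin d) ℂ)) := by
  have key : ∀ ρ : Fin (n + 1) → Matrix (Fin d) (Fin d) ℂ,
      (∑ m : Fin (n + 1), ∑ α : A, (V α m)ᴴ * ρ m * V α m).trace
        = ∑ m : Fin (n + 1), ((∑ α : A, V α m * (V α m)ᴴ) * ρ m).trace := by
    intro ρ
    rw [Matrix.trace_sum]
    refine Finset.sum_congr rfl fun m _ => ?_
    rw [Matrix.trace_sum, Finset.sum_mul, Matrix.trace_sum]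
    exact Finset.sum_congr rfl fun α _ => by rw [Matrix.trace_mul_cycle]
  constructor
  · intro h
    have hW : ∀ m, (∑ α : A, V α m * (V α m)ᴴ).PosSemidef := fun m =>
      Finset.sum_induction _ _ (fun a b ha hb => ha.add hb) Matrix.PosSemidef.zero
        (fun α _ => Matrix.posSemidef_self_mul_conjTranspose _)
    have hdC : (d : ℂ) ≠ 0 := Nat.cast_ne_zero.mpr hd.ne'
    have hinv : 0 ≤ ((d : ℂ))⁻¹ := by
      rw [show ((d : ℂ))⁻¹ = (((d : ℝ)⁻¹ : ℝ) : ℂ) by push_cast; ring]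
      exact Complex.zero_le_real.mpr (by positivity)
    set ρ0 : Matrix (Fin d) (Fin d) ℂ := ((d : ℂ))⁻¹ • 1 with hρ0def
    have hρ0 : ρ0.PosSemidef ∧ ρ0.trace = 1 := by
      refine ⟨aux_smul_psd hinv Matrix.PosSemidef.one, ?_⟩
      rw [hρ0def, Matrix.trace_smul, Matrix.trace_one, Fintype.card_fin, smul_eq_mul]
      field_simp
    have hconst : ∀ m (σ : Matrix (Fin d) (Fin d) ℂ), σ.PosSemidef → σ.trace = 1 →
        ((∑ α : A, V α m * (V α m)ᴴ) * σ).trace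
          = ((∑ α : A, V α m * (V α m)ᴴ) * ρ0).trace := by
      intro m σ hσ1 hσ2
      have h1 := h (Function.update (fun _ => ρ0) m σ) (fun k => by
        rcases eq_or_ne k m with rfl | hk
        · simpa using ⟨hσ1, hσ2⟩
        · rw [Function.update_of_ne hk]; exact hρ0)
      have h2 := h (fun _ => ρ0) (fun _ => hρ0)
      rw [key] at h1 h2
      rw [← Finset.add_sum_erase _ _ (Finset.mem_univ m)] at h1 h2
      have he : ∑ k ∈ Finset.univ.erase m,
            ((∑ α : A, V α k * (V α k)ᴴ) * (Function.update (fun _ => ρ0) m σ) k).trace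
          = ∑ k ∈ Finset.univ.erase m, ((∑ α : A, V α k * (V α k)ᴴ) * ρ0).trace := by
        refine Finset.sum_congr rfl fun k hk => ?_
        rw [Function.update_of_ne (Finset.ne_of_mem_erase hk)]
      rw [Function.update_self, he] at h1
      exact add_right_cancel (h1.trans h2.symm)
    set c : Fin (n + 1) → ℂ := fun m => ((∑ α : A, V α m * (V α m)ᴴ) * ρ0).trace with hcdef
    have hquad : ∀ m (x : Fin d → ℂ),
        dotProduct (star x) ((∑ α : A, V α m * (V α m)ᴴ) *ᵥ x)
          = c m * dotProduct (star x) x := by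
      intro m x
      rcases eq_or_ne x 0 with rfl | hx
      · simp
      · set t : ℂ := dotProduct (star x) x with htdef
        have ht0 : t ≠ 0 := fun hz => hx (dotProduct_star_self_eq_zero.mp hz)
        have htpos : 0 ≤ t := dotProduct_star_self_nonneg x
        set σ : Matrix (Fin d) (Fin d) ℂ := t⁻¹ • Matrix.vecMulVec x (star x) with hσdef
        have hσ1 : σ.PosSemidef := aux_smul_psd (aux_inv_nonneg htpos) (aux_vecMulVec_psd x)
        have htr : (Matrix.vecMulVec x (star x)).trace = t := by
          rw [← one_mul (Matrix.vecMulVec x (star x)), aux_trace_mul_vecMulVec,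
            Matrix.one_mulVec]
        have hσ2 : σ.trace = 1 := by
          rw [hσdef, Matrix.trace_smul, htr, smul_eq_mul, inv_mul_cancel₀ ht0]
        have hc := hconst m σ hσ1 hσ2
        rw [hσdef, Matrix.mul_smul, Matrix.trace_smul, smul_eq_mul,
          aux_trace_mul_vecMulVec] at hc
        calc dotProduct (star x) ((∑ α : A, V α m * (V α m)ᴴ) *ᵥ x)
            = t * (t⁻¹ * dotProduct (star x) ((∑ α : A, V α m * (V α m)ᴴ) *ᵥ x)) := by
              rw [← mul_assoc, mul_inv_cancel₀ ht0, one_mul]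
          _ = c m * t := by rw [hc]; ring
    have hscal : ∀ m, (∑ α : A, V α m * (V α m)ᴴ)
        = c m • (1 : Matrix (Fin d) (Fin d) ℂ) := by
      intro m
      have hz : ((∑ α : A, V α m * (V α m)ᴴ) - c m • 1) = 0 := by
        refine aux_quad_zero _ (fun x => ?_)
        rw [Matrix.sub_mulVec, dotProduct_sub, hquad m x,
          Matrix.smul_mulVec, Matrix.one_mulVec, dotProduct_smul,
          smul_eq_mul, sub_self]
      exact sub_eq_zero.mp hz
    have i0 : Fin d := ⟨0, hd⟩
    have hc0 : ∀ m, 0 ≤ c m := fun m => by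
      have hq := hquad m (Pi.single i0 1)
      have hdot : dotProduct (star (Pi.single i0 1)) (Pi.single i0 1) = (1 : ℂ) := by
        simp [dotProduct, Pi.single_apply, apply_ite]
      rw [hdot, mul_one] at hq
      rw [← hq]
      exact (hW m).dotProduct_mulVec_nonneg _
    have hcre : ∀ m, c m = (((c m).re : ℝ) : ℂ) := fun m =>
      Complex.ext rfl (by simpa using ((Complex.le_def.mp (hc0 m)).2).symm)
    have hsum : ∑ m, c m = 1 := by
      have := h (fun _ => ρ0) (fun _ => hρ0)
      rw [key] at this
      exact this
    refine ⟨fun m => (c m).re, fun m => ?_, ?_, fun m => ?_⟩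
    · simpa using (Complex.le_def.mp (hc0 m)).1
    · have := congrArg Complex.re hsum
      simpa [Complex.re_sum] using this
    · rw [hscal m, hcre m]
  · rintro ⟨p, hp0, hps, hpV⟩ ρ hρ
    rw [key]
    calc ∑ m : Fin (n + 1), ((∑ α : A, V α m * (V α m)ᴴ) * ρ m).trace
        = ∑ m : Fin (n + 1), ((p m : ℝ) : ℂ) := by
          refine Finset.sum_congr rfl fun m _ => ?_
          rw [hpV m, Matrix.smul_mul, one_mul, Matrix.trace_smul, (hρ m).2,
            smul_eq_mul, mul_one]
      _ = 1 := by rw [← Complex.ofReal_sum, hps, Complex.ofReal_one]
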